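/- The number of subsets S of {t+1, t+2, ..., m−1} such that any two distinct elements of S differ by more than t equals x(m), where x(i) = 1 for 1 ≤ i ≤ t+1 and x(i) = x(i−t−1) + x(i−1) for i > t+1. -/
import Mathlib


theorem stmt_5 (t m : ℕ) (hm : m ≥ t + 2) (x : ℕ → ℕ)
    (hbase : ∀ i, 1 ≤ i → i ≤ t + 1 → x i = 1)
    (hrec : ∀ i, i > t + 1 → x i = x (i - t - 1) + x (i - 1)) :
    (((Finset.Icc (t + 1) (m - 1)).powerset.filter
        (fun S => ∀ a ∈ S, ∀ b ∈ S, a < b → t < b - a)).card) = x m := by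
  suffices h : ∀ n, 1 ≤ n → (((Finset.Icc (t + 1) (n - 1)).powerset.filter
      (fun S => ∀ a ∈ S, ∀ b ∈ S, a < b → t < b - a)).card) = x n from h m (by omega)
  intro n
  induction n using Nat.strong_induction_on with
  | _ n ih =>
    intro hn
    by_cases hsmall : n ≤ t + 1
    · have he : Finset.Icc (t + 1) (n - 1) = ∅ := by
        apply Finset.Icc_eq_empty; omega
      rw [he, hbase n hn hsmall, Finset.powerset_empty, Finset.filter_singleton]
      simp
    · push_neg at hsmall
      rw [hrec n hsmall]
      set P : ℕ → Finset (Finset ℕ) :=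
        fun k => (Finset.Icc (t + 1) (k - 1)).powerset.filter
          (fun S => ∀ a ∈ S, ∀ b ∈ S, a < b → t < b - a) with hP
      have hsplit : (P n).card =
          ((P n).filter (fun S => (n - 1) ∈ S)).card +
          ((P n).filter (fun S => (n - 1) ∉ S)).card :=
        (Finset.card_filter_add_card_filter_not _).symm
      have hA : (P n).filter (fun S => (n - 1) ∉ S) = P (n - 1) := by
        ext S
        simp only [hP, Finset.mem_filter, Finset.mem_powerset]
        constructor
        · rintro ⟨⟨hS, hc⟩, hnot⟩
          refine ⟨fun a ha => ?_, hc⟩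
          have hne : a ≠ n - 1 := fun h => hnot (h ▸ ha)
          have h2 := hS ha
          simp only [Finset.mem_Icc] at h2 ⊢
          omega
        · rintro ⟨hS, hc⟩
          have hsub : ∀ a ∈ S, a ∈ Finset.Icc (t + 1) (n - 1) := by
            intro a ha
            have := hS ha
            simp only [Finset.mem_Icc] at this ⊢
            omega
          refine ⟨⟨hsub, hc⟩, fun hmem => ?_⟩
          have := hS hmem
          simp only [Finset.mem_Icc] at this
          omega
      have hB : ((P n).filter (fun S => (n - 1) ∈ S)).card = (P (n - t - 1)).card := by
        apply Finset.card_bij' (fun S _ => S.erase (n - 1))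
          (fun S _ => insert (n - 1) S)
        · intro S hS
          simp only [Finset.mem_filter] at hS
          exact Finset.insert_erase hS.2
        · intro S hS
          simp only [hP, Finset.mem_filter, Finset.mem_powerset] at hS
          obtain ⟨hsub, _⟩ := hS
          apply Finset.erase_insert
          intro hmem
          have := hsub hmem
          simp only [Finset.mem_Icc] at this
          omega
        · intro S hS
          simp only [hP, Finset.mem_filter, Finset.mem_powerset] at hS ⊢
          obtain ⟨⟨hsub, hc⟩, hmem⟩ := hS
          constructor
          · intro a ha
            rw [Finset.mem_erase] at ha
            obtain ⟨hane, haS⟩ := ha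
            have h1 := hsub haS
            simp only [Finset.mem_Icc] at h1 ⊢
            have h2 : a < n - 1 := by omega
            have h3 := hc a haS (n - 1) hmem h2
            omega
          · intro a ha b hb hab
            exact hc a (Finset.mem_of_mem_erase ha) b (Finset.mem_of_mem_erase hb) hab
        · intro S hS
          simp only [hP, Finset.mem_filter, Finset.mem_powerset] at hS ⊢
          obtain ⟨hsub, hc⟩ := hS
          refine ⟨⟨fun a ha => ?_, ?_⟩, Finset.mem_insert_self _ _⟩
          · rcases Finset.mem_insert.mp ha with h | h
            · simp only [Finset.mem_Icc]; omega
            · have := hsub h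
              simp only [Finset.mem_Icc] at this ⊢
              omega
          · intro a ha b hb hab
            rcases Finset.mem_insert.mp ha with h1 | h1 <;>
              rcases Finset.mem_insert.mp hb with h2 | h2
            · omega
            · have := hsub h2; simp only [Finset.mem_Icc] at this; omega
            · have := hsub h1; simp only [Finset.mem_Icc] at this; omega
            · exact hc a h1 b h2 hab
      have e1 : (P (n - 1)).card = x (n - 1) := ih (n - 1) (by omega) (by omega)
      have e2 : (P (n - t - 1)).card = x (n - t - 1) := ih (n - t - 1) (by omega) (by omega)
      rw [hsplit, hB, hA, e1, e2]
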